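/- Let i, i' ∈ I with m(i,i') = 2 (so s_i and s_{i'} commute), and let 𝓛 be a nonempty convex subset of W. Then the noninvertible Bender–Knuth toggles commute: τ_i ∘ τ_{i'} = τ_{i'} ∘ τ_i. -/
import Mathlib


open scoped Classical

noncomputable section

namespace BKBilliards

variable {I : Type*} [Fintype I] [DecidableEq I]
variable {M : CoxeterMatrix I} {W : Type*} [Group W]

/-- The simple root indexed by `i`, i.e. the `i`-th standard basis vector of `ℝ^I`. -/
def sroot (i : I) : I → ℝ := Pi.single i 1

/-- The data `(ρ, B)` constitutes the standard geometric representation of the Coxeter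
system `cs`, together with its induced symmetric bilinear form (with `μ = 1` on all
pairs whose Coxeter matrix entry is `∞`, encoded as `0`). -/
structure IsGeometric (cs : CoxeterSystem M W) (ρ : Representation ℝ W (I → ℝ))
    (B : LinearMap.BilinForm ℝ (I → ℝ)) : Prop where
  /-- `B(αᵢ, αᵢ') = -cos (π / m i i')` when `m i i' ≠ ∞`. -/
  form_apply_of_ne_zero : ∀ i i' : I, M i i' ≠ 0 →
    B (sroot i) (sroot i') = - Real.cos (Real.pi / (M i i' : ℝ))
  /-- `B(αᵢ, αᵢ') = -1` when `m i i' = ∞` (encoded as `0`). -/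
  form_apply_of_eq_zero : ∀ i i' : I, M i i' = 0 → B (sroot i) (sroot i') = -1
  /-- Each simple reflection acts by the reflection formula. -/
  simple_apply : ∀ (i : I) (v : I → ℝ), ρ (cs.simple i) v = v - (2 * B v (sroot i)) • sroot i

variable (ρ : Representation ℝ W (I → ℝ))

/-- The root system `Φ = {w αᵢ : w ∈ W, i ∈ I}`. -/
def Phi : Set (I → ℝ) := {v | ∃ (w : W) (i : I), v = ρ w (sroot i)}

/-- The half-space `H_β⁺ = {w ∈ W : w β ∈ Φ⁺}`: for a root `β`, membership amounts to
`w β` being a nonnegative combination of the simple roots. -/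
def Hplus (β : I → ℝ) : Set W := {w : W | 0 ≤ ρ w β}

/-- `R(𝓛) = {β ∈ Φ : 𝓛 ⊆ H_β⁺}`. -/
def RL (L : Set W) : Set (I → ℝ) := {β | β ∈ Phi ρ ∧ ∀ w ∈ L, w ∈ Hplus ρ β}

/-- `𝓛` is convex if it equals the intersection of all half-spaces containing it. -/
def IsConvex (L : Set W) : Prop := ∀ u : W, (∀ β ∈ RL ρ L, u ∈ Hplus ρ β) → u ∈ L

/-- The set of separators of `u`: `Sep(u) = {β ∈ R(𝓛) : u β ∈ Φ⁻}`. -/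
def Sep (L : Set W) (u : W) : Set (I → ℝ) := {β | β ∈ RL ρ L ∧ ρ u β ≤ 0}

variable (cs : CoxeterSystem M W)

/-- The noninvertible Bender–Knuth toggle `τᵢ` associated to the convex set `𝓛`. -/
def toggle (L : Set W) (i : I) (u : W) : W :=
  if ρ u⁻¹ (sroot i) ∈ RL ρ L then u else cs.simple i * u

/-- For a word `𝗐 = i_M ⋯ i_1` (a list whose head is `i_M`), the composition
`τ_𝗐 = τ_{i_M} ⋯ τ_{i_1}`. -/
def toggleWord (L : Set W) (l : List I) (u : W) : W :=
  l.foldr (fun i v => toggle ρ cs L i v) u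

/-- `β` dominates `β'` if `H_β⁺ ⊇ H_{β'}⁺`. -/
def Dominates (β β' : I → ℝ) : Prop := Hplus ρ β' ⊆ Hplus ρ β

/-- A small root: a positive root dominating no positive root other than itself. -/
def IsSmall (β : I → ℝ) : Prop :=
  β ∈ Phi ρ ∧ 0 ≤ β ∧ ∀ β', β' ∈ Phi ρ → 0 ≤ β' → Dominates ρ β β' → β' = β

/-- `β` is a transmitting root of the stratum `Str(R)`:
`β ∈ R(𝓛)` and `β = -w⁻¹ αᵢ` for some `w` with `Sep(w) = R` and some `i ∈ I`. -/
def IsTransmitting (L : Set W) (R : Set (I → ℝ)) (β : I → ℝ) : Prop :=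
  β ∈ RL ρ L ∧ ∃ (w : W) (i : I), Sep ρ L w = R ∧ β = - ρ w⁻¹ (sroot i)

end BKBilliards

open BKBilliards

/-- If `m(i, i') = 2`, then the toggles `τᵢ` and `τᵢ'` commute. -/
theorem toggle_comm
    {I : Type*} [Fintype I] [DecidableEq I] {M : CoxeterMatrix I} {W : Type*} [Group W]
    (cs : CoxeterSystem M W) (ρ : Representation ℝ W (I → ℝ))
    (B : LinearMap.BilinForm ℝ (I → ℝ)) (hgeom : IsGeometric cs ρ B)
    (L : Set W) (hL : L.Nonempty) (hconv : IsConvex ρ L)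
    (i i' : I) (hm : M i i' = 2) :
    ∀ u : W, toggle ρ cs L i (toggle ρ cs L i' u) = toggle ρ cs L i' (toggle ρ cs L i u) := by
  intro u
  -- B(αᵢ, αᵢ') = 0 and B(αᵢ', αᵢ) = 0
  have hB : B (sroot i) (sroot i' : I → ℝ) = 0 := by
    have := hgeom.form_apply_of_ne_zero i i' (by omega)
    rw [hm] at this
    norm_num [Real.cos_pi_div_two] at this
    simpa using this
  have hB' : B (sroot i') (sroot i : I → ℝ) = 0 := by
    have hm' : M i' i = 2 := (M.symmetric i' i).trans hm
    have := hgeom.form_apply_of_ne_zero i' i (by omega)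
    rw [hm'] at this
    norm_num [Real.cos_pi_div_two] at this
    simpa using this
  -- s_{i'} fixes αᵢ and vice versa
  have hfix : ρ (cs.simple i') (sroot i) = sroot i := by
    rw [hgeom.simple_apply, hB]; simp
  have hfix' : ρ (cs.simple i) (sroot i') = sroot i' := by
    rw [hgeom.simple_apply, hB']; simp
  -- commutation of the simple reflections
  have hcomm : cs.simple i * cs.simple i' = cs.simple i' * cs.simple i := by
    have h := cs.simple_mul_simple_pow i i'
    rw [hm] at h
    have h2 : (cs.simple i * cs.simple i') * (cs.simple i * cs.simple i') = 1 := by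
      rw [← pow_two]; exact h
    have : cs.simple i * cs.simple i' = (cs.simple i * cs.simple i')⁻¹ :=
      eq_inv_of_mul_eq_one_left h2
    rw [this, mul_inv_rev, cs.inv_simple, cs.inv_simple]
  -- condition invariance
  have hinv : ∀ v : W, ρ (cs.simple i' * v)⁻¹ (sroot i) = ρ v⁻¹ (sroot i) := by
    intro v
    rw [mul_inv_rev, cs.inv_simple, map_mul]
    simp [hfix]
  have hinv' : ∀ v : W, ρ (cs.simple i * v)⁻¹ (sroot i') = ρ v⁻¹ (sroot i') := by
    intro v
    rw [mul_inv_rev, cs.inv_simple, map_mul]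
    simp [hfix']
  unfold toggle
  by_cases h1 : ρ u⁻¹ (sroot i) ∈ RL ρ L <;> by_cases h2 : ρ u⁻¹ (sroot i') ∈ RL ρ L <;>
    simp [h1, h2, hinv, hinv', hfix, hfix', mul_assoc, ← mul_assoc, hcomm]
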